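/- arXiv:1812.10242 — 2 statements merged into one kernel-verified Lean document; each statement's English description precedes it below -/
import Mathlib

section
/- Let σ be an element of the increasing monoid I. Then there exists a unique strictly increasing sequence of integers 1 ≤ n_1 < n_2 < ⋯ < n_r such that σ = α_{n_r} ∘ α_{n_{r-1}} ∘ ⋯ ∘ α_{n_1}; moreover r = ℓ(σ), the length of σ (the integer ℓ such that σ(n) = n + ℓ for all sufficiently large n). -/
open scoped Classical

noncomputable section

/-- The increasing monoid `I`: the submonoid of `Function.End ℕ+` (functions under
composition) consisting of strictly increasing functions `σ : ℕ+ → ℕ+` such that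
`σ n = n + ℓ` for some `ℓ` and all sufficiently large `n`. -/
def IncMonoid : Submonoid (Function.End ℕ+) where
  carrier := {f | StrictMono f ∧ ∃ (l : ℕ) (N : ℕ+), ∀ n : ℕ+, N ≤ n → ((f n : ℕ) = (n : ℕ) + l)}
  one_mem' := ⟨fun _ _ h => h, 0, 1, fun n _ => by show ((n : ℕ+) : ℕ) = (n : ℕ) + 0; omega⟩
  mul_mem' := by
    rintro f g ⟨hf1, lf, Nf, hf2⟩ ⟨hg1, lg, Ng, hg2⟩
    refine ⟨hf1.comp hg1, lg + lf, max Nf Ng, fun n hn => ?_⟩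
    have h1 : (g n : ℕ) = (n : ℕ) + lg := hg2 n (le_trans (le_max_right _ _) hn)
    have h2 : Nf ≤ g n := by
      rw [← PNat.coe_le_coe, h1]
      have : (Nf : ℕ) ≤ (n : ℕ) := (PNat.coe_le_coe _ _).2 (le_trans (le_max_left _ _) hn)
      omega
    have h3 := hf2 (g n) h2
    show ((f (g n) : ℕ)) = (n : ℕ) + (lg + lf)
    omega

/-- The increasing monoid, as a type. -/
abbrev IncM : Type := IncMonoid

theorem IncM.strictMono (σ : IncM) : StrictMono σ.1 := σ.2.1

theorem IncM.le_apply (σ : IncM) (n : ℕ+) : n ≤ σ.1 n := by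
  induction n using PNat.recOn with
  | one => exact (σ.1 1).one_le
  | succ n ih =>
      have h2 : σ.1 n < σ.1 (n + 1) := σ.strictMono (by rw [← PNat.coe_lt_coe]; push_cast; omega)
      rw [← PNat.coe_le_coe] at *
      rw [← PNat.coe_lt_coe] at h2
      push_cast at *
      omega

/-- The underlying function of the generator `α_k`. -/
def alphaFun (k : ℕ+) : Function.End ℕ+ := fun n => if n < k then n else n + 1

theorem alphaFun_strictMono (k : ℕ+) : StrictMono (alphaFun k) := by
  intro a b hab
  unfold alphaFun
  split_ifs with h1 h2 <;>
    rw [← PNat.coe_lt_coe] at * <;> push_cast at * <;> omega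

theorem alphaFun_mem (k : ℕ+) : alphaFun k ∈ IncMonoid := by
  refine ⟨alphaFun_strictMono k, 1, k, fun n hn => ?_⟩
  unfold alphaFun
  rw [if_neg (not_lt.2 hn)]
  push_cast
  ring

/-- The generator `α_k` of the increasing monoid (`k ≥ 1`). -/
def alpha (k : ℕ+) : IncM := ⟨alphaFun k, alphaFun_mem k⟩

/-- The submonoid `I_{≥ n}` of `I` generated by the `α_i` with `i ≥ n`. -/
def Iges (n : ℕ+) : Submonoid IncM := Submonoid.closure (alpha '' Set.Ici n)

/-- The submonoid `I_{> n}` of `I` generated by the `α_i` with `i > n`. -/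
def Igt (n : ℕ) : Submonoid IncM := Submonoid.closure {s | ∃ i : ℕ+, n < (i : ℕ) ∧ s = alpha i}

/-- The monoid algebra `k[I]` of the increasing monoid. -/
abbrev IncAlg (k : Type*) [Field k] : Type _ := MonoidAlgebra k IncM

/-- The image of `σ ∈ I` in the monoid algebra `k[I]`. -/
abbrev ofInc (k : Type*) [Field k] (σ : IncM) : IncAlg k := MonoidAlgebra.of k IncM σ

/-- A `k[I]`-module is smooth if every vector is fixed by some `I_{>n}`. -/
def IsSmoothMod (k : Type*) [Field k] (M : Type*) [AddCommMonoid M]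
    [Module (IncAlg k) M] : Prop :=
  ∀ x : M, ∃ n : ℕ, ∀ σ ∈ Igt n, ofInc k σ • x = x

/-! ### The principal modules `A^r` -/

/-- Index set for the basis of the principal module `A^r`:
strictly increasing `r`-tuples of positive integers. -/
def Idx (r : ℕ) : Type := {v : Fin r → ℕ+ // StrictMono v}

/-- The action of `σ ∈ I` on the index set of `A^r`. -/
def idxAct {r : ℕ} (σ : IncM) (t : Idx r) : Idx r :=
  ⟨σ.1 ∘ t.1, (IncM.strictMono σ).comp t.2⟩

/-- The representation of the increasing monoid on the principal module `A^r`. -/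
def prinRep (k : Type*) [Field k] (r : ℕ) : Representation k IncM (Idx r →₀ k) where
  toFun σ := Finsupp.lmapDomain k k (idxAct σ)
  map_one' := LinearMap.ext fun v => by
    have h : (idxAct (1 : IncM) : Idx r → Idx r) = id := funext fun t => rfl
    simp [Finsupp.lmapDomain_apply, h, Finsupp.mapDomain_id]
  map_mul' := fun σ τ => LinearMap.ext fun v => by
    have h : (idxAct (σ * τ) : Idx r → Idx r) = (idxAct σ) ∘ (idxAct τ) :=
      funext fun t => rfl
    show Finsupp.lmapDomain k k (idxAct (σ * τ)) v =
      Finsupp.lmapDomain k k (idxAct σ) (Finsupp.lmapDomain k k (idxAct τ) v)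
    simp [Finsupp.lmapDomain_apply, h, Finsupp.mapDomain_comp]

/-- The principal module `A^r`, as a module over the monoid algebra `k[I]`. -/
abbrev PrinMod (k : Type*) [Field k] (r : ℕ) : Type _ := (prinRep k r).asModule

/-- The basis vector `e_t` of the principal module `A^r`. -/
def ePrin (k : Type*) [Field k] {r : ℕ} (t : Idx r) : PrinMod k r :=
  (prinRep k r).asModuleEquiv.symm (Finsupp.single t 1)

/-- The tuple `(1, 2, …, r)` indexing the canonical generator `e_{1,…,r}` of `A^r`. -/
def iotaIdx (r : ℕ) : Idx r :=
  ⟨fun i => ⟨(i : ℕ) + 1, Nat.succ_pos _⟩, fun a b h => by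
    exact Nat.succ_lt_succ h⟩

/-! ### The simple modules `B^n` -/

/-- `σ ∈ I` fixes the natural number `n`, with the convention `σ 0 = 0`. -/
def fixesNat (σ : IncM) (n : ℕ) : Prop := ∀ h : 0 < n, σ.1 ⟨n, h⟩ = ⟨n, h⟩

theorem fixesNat_mul (σ τ : IncM) (n : ℕ) :
    fixesNat (σ * τ) n ↔ fixesNat σ n ∧ fixesNat τ n := by
  rcases Nat.eq_zero_or_pos n with h0 | h0
  · subst h0
    constructor
    · exact fun _ => ⟨fun h => absurd h (lt_irrefl 0), fun h => absurd h (lt_irrefl 0)⟩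
    · exact fun _ h => absurd h (lt_irrefl 0)
  · set p : ℕ+ := ⟨n, h0⟩
    have happ : ∀ h : 0 < n, (σ * τ).1 ⟨n, h⟩ = σ.1 (τ.1 ⟨n, h⟩) := fun _ => rfl
    constructor
    · intro h
      have hfix : σ.1 (τ.1 p) = p := h h0
      have h1 : p ≤ τ.1 p := τ.le_apply p
      have h2 : τ.1 p ≤ σ.1 (τ.1 p) := σ.le_apply _
      have hτp : τ.1 p = p := le_antisymm (h2.trans_eq hfix) h1
      have hσp : σ.1 p = p := by rw [hτp] at hfix; exact hfix
      exact ⟨fun _ => hσp, fun _ => hτp⟩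
    · rintro ⟨hσ, hτ⟩ h
      rw [happ h]
      have := hτ h0
      rw [this, hσ h0]

/-- The representation of the increasing monoid on the simple module `B^n`:
`σ` acts by the identity if `σ(n) = n` (with `σ(0) = 0`) and by `0` otherwise. -/
def bRep (k : Type*) [Field k] (n : ℕ) : Representation k IncM k where
  toFun σ := if fixesNat σ n then 1 else 0
  map_one' := by
    try dsimp only
    rw [if_pos]
    intro h
    rfl
  map_mul' := fun σ τ => by
    try dsimp only
    by_cases hσ : fixesNat σ n
    · by_cases hτ : fixesNat τ n
      · rw [if_pos ((fixesNat_mul σ τ n).2 ⟨hσ, hτ⟩), if_pos hσ, if_pos hτ, one_mul]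
      · rw [if_neg (fun h => hτ ((fixesNat_mul σ τ n).1 h).2), if_pos hσ, if_neg hτ, one_mul]
    · by_cases hτ : fixesNat τ n
      · rw [if_neg (fun h => hσ ((fixesNat_mul σ τ n).1 h).1), if_neg hσ, if_pos hτ, mul_one]
      · rw [if_neg (fun h => hσ ((fixesNat_mul σ τ n).1 h).1), if_neg hσ, if_neg hτ, mul_zero]

/-- The simple module `B^n`, as a module over the monoid algebra `k[I]`. -/
abbrev BMod (k : Type*) [Field k] (n : ℕ) : Type _ := (bRep k n).asModule


/-! ### Auxiliary lemmas for the factorization theorem -/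

theorem IncM.mul_apply' (σ τ : IncM) (n : ℕ+) : (σ * τ).1 n = σ.1 (τ.1 n) := rfl

theorem alpha_apply_of_lt {k n : ℕ+} (h : n < k) : (alpha k).1 n = n := if_pos h

theorem alpha_apply_of_ge {k n : ℕ+} (h : k ≤ n) : (alpha k).1 n = n + 1 :=
  if_neg (not_lt.2 h)

theorem mem_range_alpha {k m : ℕ+} : m ∈ Set.range (alpha k).1 ↔ m ≠ k := by
  constructor
  · rintro ⟨n, rfl⟩
    by_cases h : n < k
    · rw [alpha_apply_of_lt h]; exact ne_of_lt h
    · rw [alpha_apply_of_ge (not_lt.1 h)]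
      intro he
      have h1 : (k : ℕ) ≤ (n : ℕ) := (PNat.coe_le_coe _ _).2 (not_lt.1 h)
      have h2 : ((n + 1 : ℕ+) : ℕ) = (k : ℕ) := by rw [he]
      push_cast at h2
      omega
  · intro h
    rcases lt_or_gt_of_ne h with h1 | h1
    · exact ⟨m, alpha_apply_of_lt h1⟩
    · have hk1 : (0 : ℕ) < (k : ℕ) := k.pos
      have hm : (k : ℕ) < (m : ℕ) := (PNat.coe_lt_coe _ _).2 h1
      refine ⟨⟨(m : ℕ) - 1, by omega⟩, ?_⟩
      have hk : k ≤ (⟨(m : ℕ) - 1, by omega⟩ : ℕ+) := by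
        exact (PNat.coe_le_coe k ⟨(m : ℕ) - 1, by omega⟩).1 (by show (k : ℕ) ≤ (m : ℕ) - 1; omega)
      rw [alpha_apply_of_ge hk]
      apply PNat.coe_injective
      show (m : ℕ) - 1 + 1 = (m : ℕ)
      omega

theorem not_mem_range_mul {σ τ : IncM} {m : ℕ+} :
    m ∉ Set.range (σ * τ).1 ↔ m ∉ Set.range σ.1 ∨ ∃ p, σ.1 p = m ∧ p ∉ Set.range τ.1 := by
  constructor
  · intro h
    by_cases hm : m ∈ Set.range σ.1
    · obtain ⟨p, hp⟩ := hm
      exact Or.inr ⟨p, hp, fun ⟨n, hn⟩ => h ⟨n, by rw [IncM.mul_apply', hn, hp]⟩⟩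
    · exact Or.inl hm
  · rintro (h | ⟨p, hp, hpm⟩) ⟨n, hn⟩
    · exact h ⟨τ.1 n, hn⟩
    · rw [IncM.mul_apply', ← hp] at hn
      exact hpm ⟨n, (IncM.strictMono σ).injective hn⟩

theorem not_mem_range_prod : ∀ {L : List ℕ+}, L.Pairwise (· < ·) → ∀ m : ℕ+,
    (m ∉ Set.range ((L.reverse.map alpha).prod : IncM).1 ↔ m ∈ L) := by
  intro L
  induction L using List.reverseRecOn with
  | nil =>
      intro _ m
      simp only [List.reverse_nil, List.map_nil, List.prod_nil, List.not_mem_nil, iff_false,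
        not_not]
      exact ⟨m, rfl⟩
  | append_singleton L' k ih =>
      intro hL m
      have hsp := List.pairwise_append.1 hL
      have hL' : L'.Pairwise (· < ·) := hsp.1
      have hlt : ∀ x ∈ L', x < k := fun x hx =>
        hsp.2.2 x hx k (List.mem_singleton_self k)
      rw [List.reverse_append, List.reverse_singleton, List.singleton_append, List.map_cons,
        List.prod_cons, not_mem_range_mul]
      constructor
      · rintro (h | ⟨p, hp, hpL⟩)
        · have hm : m = k := by
            by_contra hne
            exact h (mem_range_alpha.2 hne)
          subst hm
          exact List.mem_append_right _ (List.mem_singleton_self m)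
        · have hpL' : p ∈ L' := (ih hL' p).1 hpL
          have : (alpha k).1 p = p := alpha_apply_of_lt (hlt p hpL')
          rw [this] at hp
          subst hp
          exact List.mem_append_left _ hpL'
      · intro hm
        rcases List.mem_append.1 hm with h | h
        · exact Or.inr ⟨m, alpha_apply_of_lt (hlt m h), (ih hL' m).2 h⟩
        · rw [List.mem_singleton] at h
          subst h
          exact Or.inl fun hr => (mem_range_alpha.1 hr) rfl

theorem prod_shift : ∀ L : List ℕ+, ∃ N : ℕ+, ∀ n : ℕ+, N ≤ n →
    ((((L.map alpha).prod : IncM)).1 n : ℕ) = (n : ℕ) + L.length := by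
  intro L
  induction L with
  | nil =>
      refine ⟨1, fun n _ => ?_⟩
      simp only [List.map_nil, List.prod_nil, List.length_nil, Nat.add_zero]
      rfl
  | cons k L ih =>
      obtain ⟨N, hN⟩ := ih
      refine ⟨max N k, fun n hn => ?_⟩
      rw [List.map_cons, List.prod_cons, IncM.mul_apply']
      have h1 : ((((L.map alpha).prod : IncM)).1 n : ℕ) = (n : ℕ) + L.length :=
        hN n (le_trans (le_max_left _ _) hn)
      have h2 : k ≤ (((L.map alpha).prod : IncM)).1 n :=
        le_trans (le_trans (le_max_right _ _) hn) (IncM.le_apply _ n)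
      rw [alpha_apply_of_ge h2]
      rw [PNat.add_coe, PNat.one_coe, h1, List.length_cons]
      omega

theorem IncM.diff_mono (σ : IncM) : ∀ (n m : ℕ+), m ≤ n →
    (σ.1 m : ℕ) + (n : ℕ) ≤ (σ.1 n : ℕ) + (m : ℕ) := by
  intro n
  induction n using PNat.recOn with
  | one =>
      intro m hm
      have : m = 1 := le_antisymm hm m.one_le
      subst this
      omega
  | succ n ih =>
      intro m hm
      have hlt1 : ((n + 1 : ℕ+) : ℕ) = (n : ℕ) + 1 := by rw [PNat.add_coe, PNat.one_coe]
      rcases eq_or_lt_of_le hm with he | hlt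
      · subst he
        omega
      · have hmn : m ≤ n := by
          have h3 := (PNat.coe_lt_coe _ _).2 hlt
          rw [hlt1] at h3
          exact (PNat.coe_le_coe _ _).1 (by omega)
        have h1 := ih m hmn
        have h2 : σ.1 n < σ.1 (n + 1) := σ.strictMono (by
          rw [← PNat.coe_lt_coe, hlt1]
          omega)
        have h2' := (PNat.coe_lt_coe _ _).2 h2
        omega

theorem eq_one_of_shift_zero (σ : IncM) (N : ℕ+)
    (h : ∀ n : ℕ+, N ≤ n → ((σ.1 n : ℕ) = (n : ℕ))) : σ = 1 := by
  apply Subtype.ext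
  funext n
  show σ.1 n = n
  apply PNat.coe_injective
  rcases le_or_gt N n with hn | hn
  · exact h n hn
  · have h1 : (n : ℕ) ≤ (σ.1 n : ℕ) := (PNat.coe_le_coe _ _).2 (IncM.le_apply σ n)
    have h2 := σ.diff_mono N n hn.le
    have h3 : (σ.1 N : ℕ) = (N : ℕ) := h N le_rfl
    omega

/-- The "gap removal" function used in the inductive construction. -/
def delFun (σ : IncM) (k : ℕ+) : Function.End ℕ+ :=
  fun n => if σ.1 n < k then σ.1 n else σ.1 n - 1

theorem delFun_coe (σ : IncM) (k : ℕ+) (hk : ∀ p, σ.1 p ≠ k) (n : ℕ+) :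
    ((delFun σ k n : ℕ+) : ℕ) =
      if (σ.1 n : ℕ) < (k : ℕ) then (σ.1 n : ℕ) else (σ.1 n : ℕ) - 1 := by
  unfold delFun
  by_cases h : σ.1 n < k
  · rw [if_pos h, if_pos ((PNat.coe_lt_coe _ _).2 h)]
  · have hgt : k < σ.1 n := lt_of_le_of_ne (not_lt.1 h) (Ne.symm (hk n))
    rw [if_neg h, if_neg (not_lt.2 ((PNat.coe_le_coe _ _).2 (le_of_lt hgt))), PNat.sub_coe,
      if_pos (lt_of_le_of_lt k.one_le hgt)]
    simp

theorem delFun_strictMono (σ : IncM) (k : ℕ+) (hk : ∀ p, σ.1 p ≠ k) :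
    StrictMono (delFun σ k) := by
  intro a b hab
  have h1 := (PNat.coe_lt_coe _ _).2 (σ.strictMono hab)
  have ha : (σ.1 a : ℕ) ≠ (k : ℕ) := fun he => hk a (PNat.coe_injective he)
  have hb : (σ.1 b : ℕ) ≠ (k : ℕ) := fun he => hk b (PNat.coe_injective he)
  have hk1 : (0 : ℕ) < (k : ℕ) := k.pos
  rw [← PNat.coe_lt_coe, delFun_coe σ k hk a, delFun_coe σ k hk b]
  split_ifs <;> omega

theorem exists_fact : ∀ (l : ℕ) (σ : IncM) (N : ℕ+),
    (∀ n : ℕ+, N ≤ n → ((σ.1 n : ℕ) = (n : ℕ) + l)) →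
    ∃ L : List ℕ+, L.Pairwise (· < ·) ∧ σ = (L.reverse.map alpha).prod := by
  intro l
  induction l with
  | zero =>
      intro σ N h
      refine ⟨[], List.Pairwise.nil, ?_⟩
      simp only [List.reverse_nil, List.map_nil, List.prod_nil]
      exact eq_one_of_shift_zero σ N fun n hn => by have := h n hn; omega
  | succ l ih =>
      intro σ N h
      -- there exists a value not in the range of σ
      have hex : ∃ i : ℕ, ∃ hi : 0 < i, (i : ℕ) < (σ.1 ⟨i, hi⟩ : ℕ) := by
        refine ⟨(N : ℕ), N.pos, ?_⟩
        have : (⟨(N : ℕ), N.pos⟩ : ℕ+) = N := rfl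
        rw [this, h N le_rfl]
        omega
      obtain ⟨hn₀pos, hn₀⟩ := Nat.find_spec hex
      have hm₀ : (⟨Nat.find hex, hn₀pos⟩ : ℕ+) ∉ Set.range σ.1 := by
        rintro ⟨p, hp⟩
        have hple : (p : ℕ) ≤ (σ.1 p : ℕ) := (PNat.coe_le_coe _ _).2 (IncM.le_apply σ p)
        have hpc : (σ.1 p : ℕ) = Nat.find hex := by rw [hp]; rfl
        have hpn : (p : ℕ) ≤ Nat.find hex := by omega
        rcases eq_or_lt_of_le hpn with he | hlt
        · have hpe : p = (⟨Nat.find hex, hn₀pos⟩ : ℕ+) := PNat.coe_injective he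
          rw [hpe] at hpc
          omega
        · have hnp : ¬ ∃ hi : 0 < (p : ℕ), ((p : ℕ)) < (σ.1 ⟨(p : ℕ), hi⟩ : ℕ) :=
            Nat.find_min hex hlt
          push_neg at hnp
          have h2 := hnp p.pos
          have hpe : (⟨(p : ℕ), p.pos⟩ : ℕ+) = p := rfl
          rw [hpe] at h2
          omega
      -- all missing values are bounded
      have hbdd : ∀ m : ℕ+, m ∉ Set.range σ.1 → (m : ℕ) ≤ (N : ℕ) + l := by
        intro m hm
        by_contra hc
        push_neg at hc
        have hNpos : (0 : ℕ) < (N : ℕ) := N.pos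
        have hp : (0 : ℕ) < (m : ℕ) - (l + 1) := by omega
        refine hm ⟨⟨(m : ℕ) - (l + 1), hp⟩, ?_⟩
        have hge : N ≤ (⟨(m : ℕ) - (l + 1), hp⟩ : ℕ+) := by
          exact (PNat.coe_le_coe N ⟨(m : ℕ) - (l + 1), hp⟩).1 (by show (N : ℕ) ≤ (m : ℕ) - (l + 1); omega)
        apply PNat.coe_injective
        rw [h _ hge]
        show (m : ℕ) - (l + 1) + (l + 1) = (m : ℕ)
        omega
      -- the largest missing value
      set P : ℕ → Prop := fun i => ∃ hi : 0 < i, (⟨i, hi⟩ : ℕ+) ∉ Set.range σ.1 with hPdef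
      have hkspec : P (Nat.findGreatest P ((N : ℕ) + l)) :=
        Nat.findGreatest_spec (hbdd _ hm₀) ⟨hn₀pos, hm₀⟩
      obtain ⟨hkpos, hkmiss⟩ := hkspec
      set k : ℕ+ := ⟨Nat.findGreatest P ((N : ℕ) + l), hkpos⟩ with hkdef
      have hkmiss' : k ∉ Set.range σ.1 := hkmiss
      have hkmax : ∀ m : ℕ+, m ∉ Set.range σ.1 → (m : ℕ) ≤ (k : ℕ) := by
        intro m hm
        by_contra hc
        push_neg at hc
        exact Nat.findGreatest_is_greatest hc (hbdd m hm) ⟨m.pos, by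
          have : (⟨(m : ℕ), m.pos⟩ : ℕ+) = m := rfl
          rw [this]; exact hm⟩
      have hσne : ∀ p, σ.1 p ≠ k := fun p he => hkmiss' ⟨p, he⟩
      have hkle : (k : ℕ) ≤ (N : ℕ) + l := Nat.findGreatest_le _
      -- the truncated function τ
      have hτshift : ∀ n : ℕ+, N ≤ n →
          (((delFun σ k n : ℕ+)) : ℕ) = (n : ℕ) + l := by
        intro n hn
        have h1 : (σ.1 n : ℕ) = (n : ℕ) + (l + 1) := h n hn
        have h2 : (N : ℕ) ≤ (n : ℕ) := (PNat.coe_le_coe _ _).2 hn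
        rw [delFun_coe σ k hσne n, if_neg (by omega)]
        omega
      set τ : IncM := ⟨delFun σ k, delFun_strictMono σ k hσne, l, N, hτshift⟩ with hτdef
      obtain ⟨L', hL's, hL'p⟩ := ih τ N hτshift
      have hcomp : σ = alpha k * τ := by
        apply Subtype.ext
        funext n
        show σ.1 n = (alpha k).1 (τ.1 n)
        by_cases hc : σ.1 n < k
        · have : τ.1 n = σ.1 n := if_pos hc
          rw [this, alpha_apply_of_lt hc]
        · have hgt : k < σ.1 n := lt_of_le_of_ne (not_lt.1 hc) (Ne.symm (hσne n))
          have hgt' : (k : ℕ) < (σ.1 n : ℕ) := (PNat.coe_lt_coe _ _).2 hgt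
          have hτc : ((τ.1 n : ℕ+) : ℕ) = (σ.1 n : ℕ) - 1 := by
            rw [hτdef]
            show ((delFun σ k n : ℕ+) : ℕ) = _
            rw [delFun_coe σ k hσne n, if_neg (by omega)]
          have hge : k ≤ τ.1 n := by
            rw [← PNat.coe_le_coe, hτc]; omega
          rw [alpha_apply_of_ge hge]
          apply PNat.coe_injective
          rw [PNat.add_coe, PNat.one_coe, hτc]
          omega
      have hlt : ∀ x ∈ L', x < k := by
        intro x hx
        have hxmiss : x ∉ Set.range ((L'.reverse.map alpha).prod : IncM).1 :=
          (not_mem_range_prod hL's x).2 hx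
        rw [← hL'p] at hxmiss
        by_contra hxk
        push_neg at hxk
        have hxk' : (k : ℕ) ≤ (x : ℕ) := (PNat.coe_le_coe _ _).2 hxk
        have hx1 : (x + 1 : ℕ+) ∈ Set.range σ.1 := by
          by_contra hmiss
          have := hkmax (x + 1) hmiss
          rw [PNat.add_coe, PNat.one_coe] at this
          omega
        obtain ⟨p, hp⟩ := hx1
        have hpc : (σ.1 p : ℕ) = (x : ℕ) + 1 := by rw [hp, PNat.add_coe, PNat.one_coe]
        refine hxmiss ⟨p, ?_⟩
        show delFun σ k p = x
        apply PNat.coe_injective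
        rw [delFun_coe σ k hσne p, if_neg (by omega)]
        omega
      refine ⟨L' ++ [k], ?_, ?_⟩
      · refine List.pairwise_append.2 ⟨hL's, List.pairwise_singleton _ _, ?_⟩
        intro x hx y hy
        rw [List.mem_singleton] at hy
        subst hy
        exact hlt x hx
      · rw [List.reverse_append, List.reverse_singleton, List.singleton_append,
          List.map_cons, List.prod_cons, ← hL'p, ← hcomp]

/-- Every `σ` in the increasing monoid is uniquely a product
`α_{n_r} ∘ ⋯ ∘ α_{n_1}` with `n_1 < n_2 < ⋯ < n_r`, and `r = ℓ(σ)`. -/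
theorem exists_unique_strict_factorization (σ : IncM) :
    (∃! L : List ℕ+, L.Pairwise (· < ·) ∧ σ = (L.reverse.map alpha).prod) ∧
      ∀ L : List ℕ+, L.Pairwise (· < ·) → σ = (L.reverse.map alpha).prod →
        ∀ (l : ℕ) (N : ℕ+), (∀ n : ℕ+, N ≤ n → ((σ.1 n : ℕ) = (n : ℕ) + l)) →
          L.length = l := by
  obtain ⟨hmono, l₀, N₀, hshift⟩ := σ.2
  constructor
  · obtain ⟨L, hLs, hLp⟩ := exists_fact l₀ σ N₀ hshift
    refine ⟨L, ⟨hLs, hLp⟩, ?_⟩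
    rintro L' ⟨hL's, hL'p⟩
    haveI : Std.Antisymm (α := ℕ+) (· < ·) := ⟨fun a b h h' => absurd (h.trans h') (lt_irrefl a)⟩
    refine List.Perm.eq_of_pairwise' hL's hLs ?_
    refine (List.perm_ext_iff_of_nodup hL's.nodup hLs.nodup).2 fun m => ?_
    rw [← not_mem_range_prod hL's m, ← not_mem_range_prod hLs m, ← hLp, ← hL'p]
  · intro L hLs hLp l N hN
    obtain ⟨N', hN'⟩ := prod_shift L.reverse
    have h1 := hN' (max N N') (le_max_right _ _)
    have h2 := hN (max N N') (le_max_left _ _)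
    rw [hLp] at h2
    rw [List.length_reverse] at h1
    omega

end
end

section
/- Fix a field k and r ∈ ℕ. Order the strictly increasing r-tuples of positive integers lexicographically with larger positions compared first: (i_1,…,i_r) < (j_1,…,j_r) if i_k < j_k where k is the maximal index with i_k ≠ j_k. For a nonzero x ∈ A^r, let in(x) denote the basis vector e_t for t the maximal tuple (in this order) occurring with nonzero coefficient in x; for a k[I]-submodule M of A^r let in(M) be the k-span of {in(x) : 0 ≠ x ∈ M}. Then: if M ⊆ N are k[I]-submodules of A^r with in(M) = in(N), then M = N. -/
open scoped Classical

noncomputable section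

/-- The lexicographic order on strictly increasing tuples in which larger positions
are compared first: `t < s` iff `t K < s K` for the largest index `K` where they
differ. -/
def tupLT {r : ℕ} (t s : Idx r) : Prop :=
  ∃ K : Fin r, t.1 K < s.1 K ∧ ∀ j : Fin r, K < j → t.1 j = s.1 j

/-- `t` indexes the initial term of `x`: `t` lies in the support of `x` and is the
largest element of the support. -/
def IsLead {k : Type*} [Field k] {r : ℕ} (x : Idx r →₀ k) (t : Idx r) : Prop :=
  t ∈ x.support ∧ ∀ s ∈ x.support, s ≠ t → tupLT s t

/-- The set of indices of initial terms of nonzero elements of a `k[I]`-submodule of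
`A^r`. -/
def leadSet (k : Type*) [Field k] {r : ℕ}
    (M : Submodule (IncAlg k) (PrinMod k r)) : Set (Idx r) :=
  {t | ∃ x ∈ M, x ≠ 0 ∧ IsLead ((prinRep k r).asModuleEquiv x) t}

/-- The initial submodule `in(M)`: the span of the initial terms of the nonzero
elements of `M`. -/
def initialSubmodule (k : Type*) [Field k] {r : ℕ}
    (M : Submodule (IncAlg k) (PrinMod k r)) : Submodule k (Idx r →₀ k) :=
  Submodule.span k ((fun t => Finsupp.single t (1 : k)) '' leadSet k M)


namespace GroebnerAux

variable {r : ℕ}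

/-- The lexicographic relation on `Fin r → ℕ+` comparing smaller indices first. -/
def lexRel : (Fin r → ℕ+) → (Fin r → ℕ+) → Prop :=
  Pi.Lex (· < ·) (fun {_} => (· < ·))

/-- Map a tuple to its underlying function with reversed indices. -/
def gl (t : Idx r) : Fin r → ℕ+ := t.1 ∘ Fin.rev

theorem gl_injective : Function.Injective (gl (r := r)) := by
  intro t s h
  apply Subtype.ext
  funext i
  have := congrFun h i.rev
  simpa [gl, Fin.rev_rev] using this

theorem tupLT_iff (t s : Idx r) : tupLT t s ↔ lexRel (gl t) (gl s) := by
  constructor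
  · rintro ⟨K, h1, h2⟩
    refine ⟨K.rev, fun j hj => ?_, ?_⟩
    · show t.1 j.rev = s.1 j.rev
      apply h2
      have hj' : j.rev.rev < K.rev := by rwa [Fin.rev_rev]
      exact Fin.rev_lt_rev.mp hj'
    · show t.1 K.rev.rev < s.1 K.rev.rev
      rwa [Fin.rev_rev]
  · rintro ⟨i, h1, h2⟩
    refine ⟨i.rev, by exact h2, fun j hj => ?_⟩
    have hj' : j.rev < i := by
      apply Fin.rev_lt_rev.mp
      rwa [Fin.rev_rev]
    have := h1 j.rev hj'
    show t.1 j = s.1 j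
    have h3 : t.1 j.rev.rev = s.1 j.rev.rev := this
    rwa [Fin.rev_rev] at h3

theorem tupLT_wf : WellFounded (tupLT (r := r)) := by
  have hwf : WellFounded (lexRel (r := r)) :=
    Pi.Lex.wellFounded (· < ·) (fun _ => wellFounded_lt)
  exact Subrelation.wf (fun {a b} h => (tupLT_iff a b).1 h) (InvImage.wf gl hwf)

theorem tupLT_trans {a b c : Idx r} (h1 : tupLT a b) (h2 : tupLT b c) : tupLT a c := by
  rw [tupLT_iff] at *
  exact @lt_trans (Lex (Fin r → ℕ+)) _ (toLex (gl a)) (toLex (gl b)) (toLex (gl c)) h1 h2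

theorem tupLT_trichotomy (t s : Idx r) (hne : t ≠ s) : tupLT t s ∨ tupLT s t := by
  have htri := Pi.isTrichotomous_lex ((· < ·) : Fin r → Fin r → Prop)
    (fun {_} => ((· < ·) : ℕ+ → ℕ+ → Prop)) (wellFounded_lt)
  have htri' : lexRel (gl t) (gl s) ∨ gl t = gl s ∨ lexRel (gl s) (gl t) := by
    by_cases h1 : lexRel (gl t) (gl s)
    · exact Or.inl h1
    by_cases h2 : lexRel (gl s) (gl t)
    · exact Or.inr (Or.inr h2)
    exact Or.inr (Or.inl (htri.trichotomous (gl t) (gl s) h1 h2))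
  rcases htri' with h | h | h
  · exact Or.inl ((tupLT_iff t s).2 h)
  · exact absurd (gl_injective h) hne
  · exact Or.inr ((tupLT_iff s t).2 h)

theorem exists_max (F : Finset (Idx r)) (h : F.Nonempty) :
    ∃ t ∈ F, ∀ s ∈ F, s ≠ t → tupLT s t := by
  induction F using Finset.induction_on with
  | empty => simp at h
  | @insert a F ha ih =>
    rcases F.eq_empty_or_nonempty with rfl | hF
    · exact ⟨a, by simp, by simp⟩
    · obtain ⟨t, htF, ht⟩ := ih hF
      have hat : a ≠ t := fun hh => ha (hh ▸ htF)
      rcases tupLT_trichotomy a t hat with hlt | hlt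
      · refine ⟨t, Finset.mem_insert_of_mem htF, fun s hs hst => ?_⟩
        rcases Finset.mem_insert.1 hs with rfl | hsF
        · exact hlt
        · exact ht s hsF hst
      · refine ⟨a, Finset.mem_insert_self a F, fun s hs hsa => ?_⟩
        rcases Finset.mem_insert.1 hs with rfl | hsF
        · exact absurd rfl hsa
        · by_cases hst : s = t
          · exact hst ▸ hlt
          · exact tupLT_trans (ht s hsF hst) hlt

theorem exists_isLead {k : Type*} [Field k] (x : Idx r →₀ k) (hx : x ≠ 0) :
    ∃ t, IsLead x t := by
  obtain ⟨t, htmem, ht⟩ := exists_max x.support (Finsupp.support_nonempty_iff.2 hx)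
  exact ⟨t, htmem, ht⟩

end GroebnerAux

open GroebnerAux in
/-- Gröbner lemma: if `M ⊆ N` are `k[I]`-submodules of `A^r` with
`in(M) = in(N)`, then `M = N`. -/
theorem groebner_initial_submodule (k : Type*) [Field k] (r : ℕ)
    (M N : Submodule (IncAlg k) (PrinMod k r)) (hMN : M ≤ N)
    (h : initialSubmodule k M = initialSubmodule k N) : M = N := by
  refine le_antisymm hMN fun x hxN => ?_
  have hEq : initialSubmodule k M = Finsupp.supported k k (leadSet k M) := by
    rw [initialSubmodule, Finsupp.supported_eq_span_single]
  set e := (prinRep k r).asModuleEquiv with he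
  have key : ∀ t : Idx r, ∀ x, x ∈ N → IsLead (e x) t → x ∈ M := by
    intro t
    induction t using tupLT_wf.induction with
    | _ t ih =>
      intro x hxN hlead
      have hxne : e x ≠ 0 := by
        intro h0
        have := hlead.1
        rw [h0] at this
        simp at this
      have hx0 : x ≠ 0 := fun h0 => hxne (by rw [h0]; exact map_zero _)
      have htN : t ∈ leadSet k N := ⟨x, hxN, hx0, hlead⟩
      have hsingle : Finsupp.single t (1 : k) ∈ initialSubmodule k M := by
        rw [h]
        exact Submodule.subset_span (Set.mem_image_of_mem _ htN)
      have htM : t ∈ leadSet k M := by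
        rw [hEq, Finsupp.mem_supported] at hsingle
        exact hsingle (by simp [Finsupp.support_single_ne_zero t (one_ne_zero (α := k))])
      obtain ⟨y, hyM, hy0, hylead⟩ := htM
      set c : k := (e x) t with hc
      set c' : k := (e y) t with hc'
      have hc'ne : c' ≠ 0 := Finsupp.mem_support_iff.1 hylead.1
      set d : k := c / c' with hd
      set a : IncAlg k := algebraMap k (IncAlg k) d with ha
      set b : IncAlg k := algebraMap k (IncAlg k) (-d) with hb
      set z : PrinMod k r := x + b • y with hz
      have hzN : z ∈ N := N.add_mem hxN (N.smul_mem b (hMN hyM))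
      have smul_eq : ∀ (u : k) (w : PrinMod k r),
          e ((algebraMap k (IncAlg k) u) • w) = u • e w := by
        intro u w
        have h1 := (prinRep k r).asModuleEquiv_symm_map_smul u (e w)
        rw [← he, e.symm_apply_apply] at h1
        rw [← h1, e.apply_symm_apply]
      have hez : e z = e x - d • e y := by
        rw [hz, map_add, hb, smul_eq, neg_smul, ← sub_eq_add_neg]
      have hezt : (e z) t = 0 := by
        rw [hez]
        simp only [Finsupp.sub_apply, Finsupp.smul_apply, ← hc, ← hc', smul_eq_mul]
        rw [hd, div_mul_cancel₀ c hc'ne, sub_self]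
      have hxa : ∀ w : PrinMod k r, e w = e x → w ∈ M → x ∈ M := by
        intro w hw hwM
        rwa [e.injective hw] at hwM
      by_cases hz0 : z = 0
      · have hexy : e x = d • e y := by
          have h1 : e z = 0 := by rw [hz0]; exact map_zero _
          rw [hez] at h1
          linear_combination (norm := abel) h1
        have hxy : x = a • y := by
          apply e.injective
          rw [ha, smul_eq, hexy]
        rw [hxy]
        exact M.smul_mem a hyM
      · have hezne : e z ≠ 0 := fun h0 => hz0 (by
          have h1 := congrArg e.symm h0
          rwa [e.symm_apply_apply, map_zero] at h1)
        obtain ⟨s, hslead⟩ := exists_isLead (e z) hezne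
        have hst : s ≠ t := fun hst => by
          rw [hst] at hslead
          exact Finsupp.mem_support_iff.1 hslead.1 hezt
        have hsub : s ∈ (e x).support ∪ (e y).support := by
          have h1 : s ∈ (e z).support := hslead.1
          rw [hez] at h1
          have h2 := Finsupp.support_sub (f := e x) (g := d • e y) h1
          rcases Finset.mem_union.1 h2 with h3 | h3
          · exact Finset.mem_union_left _ h3
          · exact Finset.mem_union_right _ (Finsupp.support_smul h3)
        have hstlt : tupLT s t := by
          rcases Finset.mem_union.1 hsub with h3 | h3
          · exact hlead.2 s h3 hst
          · exact hylead.2 s h3 hst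
        have hzM : z ∈ M := ih s hstlt z hzN hslead
        have hxzy : x = z + a • y := by
          apply e.injective
          rw [map_add, ha, smul_eq, hez, sub_add_cancel]
        rw [hxzy]
        exact M.add_mem hzM (M.smul_mem a hyM)
  by_cases hx0 : x = 0
  · rw [hx0]; exact M.zero_mem
  · have hexne : e x ≠ 0 := fun h0 => hx0 (by
      have h1 := congrArg e.symm h0
      rwa [e.symm_apply_apply, map_zero] at h1)
    obtain ⟨t, ht⟩ := exists_isLead (e x) hexne
    exact key t x hxN ht

end
end
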